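/- For a 3×3 filter F, the convolution equation F∗X = B with reflexive boundary condition is equivalent to F̂₁·X·(U_n^R)^T + F̂₂·X + F̂₃·X·(L_n^R)^T = B, where F̂_i = tridiag(f_{1i}, f_{2i}, f_{3i}) with corner corrections f_{3i} added to the (1,1) entry and f_{1i} added to the (m,m) entry, and U_n^R, L_n^R are the shift matrices with reflecting corners. -/
import Mathlib

open Matrix

/-- Reflexive upper shift matrix: superdiagonal 1's plus an extra 1 at entry `(k,k)`. -/
def URmat (k : ℕ) : Matrix (Fin k) (Fin k) ℝ :=
  Matrix.of fun i j =>
    if (i : ℕ) + 1 = (j : ℕ) ∨ ((i : ℕ) = (j : ℕ) ∧ (i : ℕ) = k - 1) then 1 else 0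

/-- Reflexive lower shift matrix: subdiagonal 1's plus an extra 1 at entry `(1,1)`. -/
def LRmat (k : ℕ) : Matrix (Fin k) (Fin k) ℝ :=
  Matrix.of fun i j =>
    if (j : ℕ) + 1 = (i : ℕ) ∨ ((i : ℕ) = (j : ℕ) ∧ (i : ℕ) = 0) then 1 else 0

/-- `tridiag(f1, f2, f3)` with corner corrections: `f3` added to the `(1,1)` entry and
`f1` added to the `(m,m)` entry. -/
def triRMat (m : ℕ) (f1 f2 f3 : ℝ) : Matrix (Fin m) (Fin m) ℝ :=
  Matrix.of fun i j =>
    if (i : ℕ) = (j : ℕ) then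
      f2 + (if (i : ℕ) = 0 then f3 else 0) + (if (i : ℕ) = m - 1 then f1 else 0)
    else if (i : ℕ) + 1 = (j : ℕ) then f1
    else if (j : ℕ) + 1 = (i : ℕ) then f3
    else 0

lemma tri_decomp (m : ℕ) (f1 f2 f3 : ℝ) :
    triRMat m f1 f2 f3 = f1 • URmat m + f2 • (1 : Matrix (Fin m) (Fin m) ℝ) + f3 • LRmat m := by
  ext i j
  have hi := i.isLt
  have hj := j.isLt
  simp only [triRMat, URmat, LRmat, Matrix.add_apply, Matrix.smul_apply, Matrix.one_apply,
    Matrix.of_apply, smul_eq_mul, Fin.ext_iff]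
  split_ifs <;> (try (exfalso; omega)) <;> ring

/-- Reflexively padded array read. -/
def padR (m n : ℕ) (x : Fin (m+2) → Fin (n+2) → ℝ) (p q : ℕ) : ℝ :=
  x ⟨min p (m+1), by omega⟩ ⟨min q (n+1), by omega⟩

lemma ind_sum {k : ℕ} (P : Fin k → Prop) [DecidablePred P] (a₀ : Fin k) (v : Fin k → ℝ)
    (h : ∀ a, P a ↔ a = a₀) :
    ∑ a, v a * (if P a then (1:ℝ) else 0) = v a₀ := by
  have key : ∀ a, v a * (if P a then (1:ℝ) else 0) = if a = a₀ then v a else 0 := by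
    intro a
    by_cases ha : P a
    · rw [if_pos ha, if_pos ((h a).mp ha)]; ring
    · rw [if_neg ha, if_neg (fun e => ha ((h a).mpr e))]; ring
  simp only [key]
  simp [Finset.sum_ite_eq']

lemma ind_sum' {k : ℕ} (P : Fin k → Prop) [DecidablePred P] (a₀ : Fin k) (v : Fin k → ℝ)
    (h : ∀ a, P a ↔ a = a₀) :
    ∑ a, (if P a then (1:ℝ) else 0) * v a = v a₀ := by
  have : ∀ a, (if P a then (1:ℝ) else 0) * v a = v a * (if P a then (1:ℝ) else 0) :=
    fun a => mul_comm _ _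
  simp only [this]
  exact ind_sum P a₀ v h

lemma mulUR {m n : ℕ} (hm : 0 < m) (Y : Matrix (Fin m) (Fin n) ℝ) (w : ℕ → ℝ) (j : Fin n)
    (hY : ∀ a : Fin m, Y a j = w ((a:ℕ)+1)) (hwm : w (m+1) = w m) (i : Fin m) :
    (URmat m * Y) i j = w ((i:ℕ)+2) := by
  have hi := i.isLt
  rw [Matrix.mul_apply]
  simp only [URmat, Matrix.of_apply]
  rw [ind_sum' (fun a => (i:ℕ) + 1 = (a:ℕ) ∨ ((i:ℕ) = (a:ℕ) ∧ (i:ℕ) = m - 1))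
      ⟨min ((i:ℕ)+1) (m-1), by omega⟩ (fun a => Y a j)
      (fun a => by have ha := a.isLt; rw [Fin.ext_iff]; simp only []; omega)]
  rw [hY]
  simp only []
  rcases Nat.lt_or_ge ((i:ℕ)+1) m with h | h
  · exact congrArg w (by omega)
  · have e : min ((i:ℕ)+1) (m-1) + 1 = m := by omega
    rw [e, ← hwm]
    exact congrArg w (by omega)

lemma mulLR {m n : ℕ} (hm : 0 < m) (Y : Matrix (Fin m) (Fin n) ℝ) (w : ℕ → ℝ) (j : Fin n)
    (hY : ∀ a : Fin m, Y a j = w ((a:ℕ)+1)) (hw0 : w 0 = w 1) (i : Fin m) :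
    (LRmat m * Y) i j = w (i:ℕ) := by
  have hi := i.isLt
  rw [Matrix.mul_apply]
  simp only [LRmat, Matrix.of_apply]
  rw [ind_sum' (fun a => (a:ℕ) + 1 = (i:ℕ) ∨ ((i:ℕ) = (a:ℕ) ∧ (i:ℕ) = 0))
      ⟨(i:ℕ) - 1, by omega⟩ (fun a => Y a j)
      (fun a => by have ha := a.isLt; rw [Fin.ext_iff]; simp only []; omega)]
  rw [hY]
  simp only []
  rcases Nat.eq_zero_or_pos (i:ℕ) with h | h
  · rw [show (i:ℕ) - 1 + 1 = 1 from by omega, ← hw0]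
    exact congrArg w (by omega)
  · exact congrArg w (by omega)

lemma mulXUR {m n : ℕ} (hn : 0 < n) (X : Matrix (Fin m) (Fin n) ℝ) (w : ℕ → ℝ) (i : Fin m)
    (hX : ∀ b : Fin n, X i b = w ((b:ℕ)+1)) (hwn : w (n+1) = w n) (j : Fin n) :
    (X * (URmat n)ᵀ) i j = w ((j:ℕ)+2) := by
  have hj := j.isLt
  rw [Matrix.mul_apply]
  simp only [Matrix.transpose_apply, URmat, Matrix.of_apply]
  rw [ind_sum (fun b => (j:ℕ) + 1 = (b:ℕ) ∨ ((j:ℕ) = (b:ℕ) ∧ (j:ℕ) = n - 1))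
      ⟨min ((j:ℕ)+1) (n-1), by omega⟩ (fun b => X i b)
      (fun b => by have hb := b.isLt; rw [Fin.ext_iff]; simp only []; omega)]
  rw [hX]
  simp only []
  rcases Nat.lt_or_ge ((j:ℕ)+1) n with h | h
  · exact congrArg w (by omega)
  · have e : min ((j:ℕ)+1) (n-1) + 1 = n := by omega
    rw [e, ← hwn]
    exact congrArg w (by omega)

lemma mulXLR {m n : ℕ} (hn : 0 < n) (X : Matrix (Fin m) (Fin n) ℝ) (w : ℕ → ℝ) (i : Fin m)
    (hX : ∀ b : Fin n, X i b = w ((b:ℕ)+1)) (hw0 : w 0 = w 1) (j : Fin n) :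
    (X * (LRmat n)ᵀ) i j = w (j:ℕ) := by
  have hj := j.isLt
  rw [Matrix.mul_apply]
  simp only [Matrix.transpose_apply, LRmat, Matrix.of_apply]
  rw [ind_sum (fun b => (b:ℕ) + 1 = (j:ℕ) ∨ ((j:ℕ) = (b:ℕ) ∧ (j:ℕ) = 0))
      ⟨(j:ℕ) - 1, by omega⟩ (fun b => X i b)
      (fun b => by have hb := b.isLt; rw [Fin.ext_iff]; simp only []; omega)]
  rw [hX]
  simp only []
  rcases Nat.eq_zero_or_pos (j:ℕ) with h | h
  · rw [show (j:ℕ) - 1 + 1 = 1 from by omega, ← hw0]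
    exact congrArg w (by omega)
  · exact congrArg w (by omega)

lemma mulTri {m n : ℕ} (hm : 0 < m) (f1 f2 f3 : ℝ) (Y : Matrix (Fin m) (Fin n) ℝ)
    (w : ℕ → ℝ) (j : Fin n) (hY : ∀ a : Fin m, Y a j = w ((a:ℕ)+1))
    (hw0 : w 0 = w 1) (hwm : w (m+1) = w m) (i : Fin m) :
    (triRMat m f1 f2 f3 * Y) i j
      = f1 * w ((i:ℕ)+2) + f2 * w ((i:ℕ)+1) + f3 * w (i:ℕ) := by
  rw [tri_decomp, Matrix.add_mul, Matrix.add_mul, Matrix.smul_mul, Matrix.smul_mul,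
    Matrix.smul_mul, Matrix.one_mul, Matrix.add_apply, Matrix.add_apply, Matrix.smul_apply,
    Matrix.smul_apply, Matrix.smul_apply, mulUR hm Y w j hY hwm i, mulLR hm Y w j hY hw0 i,
    hY i]
  simp [smul_eq_mul]

/-- The convolution equation `F ∗ X = B` with the reflexive boundary condition is equivalent to
the generalized Sylvester equation `F̂₁ X (Uₙᴿ)ᵀ + F̂₂ X + F̂₃ X (Lₙᴿ)ᵀ = B`.  Here
`x : Fin (m+2) → Fin (n+2) → ℝ` is the padded array determined by `X` in the interior and by the
reflexive boundary condition on the boundary. -/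
theorem stmt6 (m n : ℕ) (hm : 0 < m) (hn : 0 < n)
    (F : Matrix (Fin 3) (Fin 3) ℝ) (X B : Matrix (Fin m) (Fin n) ℝ)
    (x : Fin (m + 2) → Fin (n + 2) → ℝ)
    (hint : ∀ (i : Fin m) (j : Fin n), x i.succ.castSucc j.succ.castSucc = X i j)
    (htop : ∀ j, x 0 j = x ⟨1, by omega⟩ j)
    (hbot : ∀ j, x (Fin.last (m + 1)) j = x ⟨m, by omega⟩ j)
    (hleft : ∀ i, x i 0 = x i ⟨1, by omega⟩)
    (hright : ∀ i, x i (Fin.last (n + 1)) = x i ⟨n, by omega⟩) :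
    (∀ (i : Fin m) (j : Fin n),
        (∑ l₁ : Fin 3, ∑ l₂ : Fin 3, F l₁ l₂ *
          x ⟨(i : ℕ) + 2 - (l₁ : ℕ), by have h1 := i.isLt; have h2 := l₁.isLt; omega⟩
            ⟨(j : ℕ) + 2 - (l₂ : ℕ), by have h1 := j.isLt; have h2 := l₂.isLt; omega⟩) = B i j)
      ↔
    triRMat m (F 0 0) (F 1 0) (F 2 0) * X * (URmat n)ᵀ
      + triRMat m (F 0 1) (F 1 1) (F 2 1) * X
      + triRMat m (F 0 2) (F 1 2) (F 2 2) * X * (LRmat n)ᵀ = B := by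
  have hfin : ∀ (a b : Fin (m+2)), (a:ℕ) = (b:ℕ) → ∀ (c d : Fin (n+2)), (c:ℕ) = (d:ℕ) →
      x a c = x b d := by
    intro a b hab c d hcd
    rw [Fin.ext_iff.mpr hab, Fin.ext_iff.mpr hcd]
  -- basic facts about padR
  have hux : ∀ (p q : ℕ) (hp : p < m+2) (hq : q < n+2),
      x ⟨p, hp⟩ ⟨q, hq⟩ = padR m n x p q :=
    fun p q hp hq => hfin _ _ (by simp; try omega) _ _ (by simp; try omega)
  have hXu : ∀ (i : Fin m) (j : Fin n), X i j = padR m n x ((i:ℕ)+1) ((j:ℕ)+1) := by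
    intro i j
    have hi := i.isLt
    have hj := j.isLt
    rw [← hint i j]
    exact hfin _ _ (by simp; try omega) _ _ (by simp; try omega)
  have hu0 : ∀ q, padR m n x 0 q = padR m n x 1 q := by
    intro q
    have h1 : padR m n x 0 q = x 0 ⟨min q (n+1), by omega⟩ :=
      hfin _ _ (by simp) _ _ rfl
    have h2 : padR m n x 1 q = x ⟨1, by omega⟩ ⟨min q (n+1), by omega⟩ :=
      hfin _ _ (by simp; try omega) _ _ rfl
    rw [h1, h2, htop]
  have hum : ∀ q, padR m n x (m+1) q = padR m n x m q := by
    intro q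
    have h1 : padR m n x (m+1) q = x (Fin.last (m+1)) ⟨min q (n+1), by omega⟩ :=
      hfin _ _ (by simp) _ _ rfl
    have h2 : padR m n x m q = x ⟨m, by omega⟩ ⟨min q (n+1), by omega⟩ :=
      hfin _ _ (by simp; try omega) _ _ rfl
    rw [h1, h2, hbot]
  have hq0 : ∀ p, padR m n x p 0 = padR m n x p 1 := by
    intro p
    have h1 : padR m n x p 0 = x ⟨min p (m+1), by omega⟩ 0 :=
      hfin _ _ rfl _ _ (by simp)
    have h2 : padR m n x p 1 = x ⟨min p (m+1), by omega⟩ ⟨1, by omega⟩ :=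
      hfin _ _ rfl _ _ (by simp; try omega)
    rw [h1, h2, hleft]
  have hqn : ∀ p, padR m n x p (n+1) = padR m n x p n := by
    intro p
    have h1 : padR m n x p (n+1) = x ⟨min p (m+1), by omega⟩ (Fin.last (n+1)) :=
      hfin _ _ rfl _ _ (by simp)
    have h2 : padR m n x p n = x ⟨min p (m+1), by omega⟩ ⟨n, by omega⟩ :=
      hfin _ _ rfl _ _ (by simp; try omega)
    rw [h1, h2, hright]
  have key : ∀ (i : Fin m) (j : Fin n),
      (∑ l₁ : Fin 3, ∑ l₂ : Fin 3, F l₁ l₂ *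
          x ⟨(i : ℕ) + 2 - (l₁ : ℕ), by have h1 := i.isLt; have h2 := l₁.isLt; omega⟩
            ⟨(j : ℕ) + 2 - (l₂ : ℕ), by have h1 := j.isLt; have h2 := l₂.isLt; omega⟩)
      = (triRMat m (F 0 0) (F 1 0) (F 2 0) * X * (URmat n)ᵀ
          + triRMat m (F 0 1) (F 1 1) (F 2 1) * X
          + triRMat m (F 0 2) (F 1 2) (F 2 2) * X * (LRmat n)ᵀ) i j := by
    intro i j
    have hi := i.isLt
    have hj := j.isLt
    have hR1 : (triRMat m (F 0 0) (F 1 0) (F 2 0) * X * (URmat n)ᵀ) i j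
        = F 0 0 * padR m n x ((i:ℕ)+2) ((j:ℕ)+2) + F 1 0 * padR m n x ((i:ℕ)+1) ((j:ℕ)+2)
          + F 2 0 * padR m n x (i:ℕ) ((j:ℕ)+2) := by
      rw [Matrix.mul_assoc]
      exact mulTri hm _ _ _ _ (fun p => padR m n x p ((j:ℕ)+2)) j
        (fun a => mulXUR hn X (fun q => padR m n x ((a:ℕ)+1) q) a (fun b => hXu a b)
          (hqn _) j)
        (hu0 _) (hum _) i
    have hR2 : (triRMat m (F 0 1) (F 1 1) (F 2 1) * X) i j
        = F 0 1 * padR m n x ((i:ℕ)+2) ((j:ℕ)+1) + F 1 1 * padR m n x ((i:ℕ)+1) ((j:ℕ)+1)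
          + F 2 1 * padR m n x (i:ℕ) ((j:ℕ)+1) :=
      mulTri hm _ _ _ _ (fun p => padR m n x p ((j:ℕ)+1)) j
        (fun a => hXu a j) (hu0 _) (hum _) i
    have hR3 : (triRMat m (F 0 2) (F 1 2) (F 2 2) * X * (LRmat n)ᵀ) i j
        = F 0 2 * padR m n x ((i:ℕ)+2) (j:ℕ) + F 1 2 * padR m n x ((i:ℕ)+1) (j:ℕ)
          + F 2 2 * padR m n x (i:ℕ) (j:ℕ) := by
      rw [Matrix.mul_assoc]
      exact mulTri hm _ _ _ _ (fun p => padR m n x p (j:ℕ)) j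
        (fun a => mulXLR hn X (fun q => padR m n x ((a:ℕ)+1) q) a (fun b => hXu a b)
          (hq0 _) j)
        (hu0 _) (hum _) i
    rw [Matrix.add_apply, Matrix.add_apply, hR1, hR2, hR3]
    simp only [Fin.sum_univ_three, hux,
      show ((0 : Fin 3) : ℕ) = 0 from rfl, show ((1 : Fin 3) : ℕ) = 1 from rfl,
      show ((2 : Fin 3) : ℕ) = 2 from rfl, Nat.sub_zero, Nat.add_sub_cancel,
      show ∀ t : ℕ, t + 2 - 1 = t + 1 from fun t => by omega]
    ring
  constructor
  · intro h
    ext i j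
    rw [← key i j]
    exact h i j
  · intro h i j
    rw [key i j, h]
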